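/- Absorption probabilities sum to one: assume A has self-confidence and let E_1, …, E_m be the ergodic classes of A. For every state i, Σ_{k=1}^m h_i^(k) = 1, where h_i^(k) := lim_{n→∞} Σ_{j∈E_k} (A^n)_{ij} (these limits exist). -/
import Mathlib


open Finset Filter Topology Matrix

/-- `j` is a consequent of `i` relative to the matrix `A`. -/
def Consequent {n : ℕ} (A : Matrix (Fin n) (Fin n) ℝ) (i j : Fin n) : Prop :=
  ∃ m : ℕ, 1 ≤ m ∧ 0 < (A ^ m) i j

/-- A state is recurrent if it is a consequent of each of its consequents. -/
def Recurrent {n : ℕ} (A : Matrix (Fin n) (Fin n) ℝ) (i : Fin n) : Prop :=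
  ∀ j, Consequent A i j → Consequent A j i

section Helpers

variable {n : ℕ} {A : Matrix (Fin n) (Fin n) ℝ}

lemma myPowNonneg (hA : ∀ i j, 0 ≤ A i j) : ∀ ℓ i j, 0 ≤ (A ^ ℓ) i j := by
  intro ℓ
  induction ℓ with
  | zero =>
    intro i j
    rw [pow_zero]
    by_cases h : i = j
    · simp [h, Matrix.one_apply]
    · simp [Matrix.one_apply_ne h]
  | succ ℓ ih =>
    intro i j
    rw [pow_succ, Matrix.mul_apply]
    exact Finset.sum_nonneg fun x _ => mul_nonneg (ih i x) (hA x j)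

lemma myPowRowSum (hA : ∀ i, ∑ j, A i j = 1) : ∀ ℓ i, ∑ j, (A ^ ℓ) i j = 1 := by
  intro ℓ
  induction ℓ with
  | zero => intro i; simp [Matrix.one_apply]
  | succ ℓ ih =>
    intro i
    simp only [pow_succ, Matrix.mul_apply]
    rw [Finset.sum_comm]
    calc ∑ x, ∑ j, (A ^ ℓ) i x * A x j
        = ∑ x, (A ^ ℓ) i x := by
          refine Finset.sum_congr rfl fun x _ => ?_
          rw [← Finset.mul_sum, hA x, mul_one]
      _ = 1 := ih i

lemma myPowEntryMul (hA : ∀ i j, 0 ≤ A i j) (a b : ℕ) (i j k : Fin n) :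
    (A ^ a) i j * (A ^ b) j k ≤ (A ^ (a + b)) i k := by
  rw [pow_add, Matrix.mul_apply]
  exact Finset.single_le_sum
    (fun x _ => mul_nonneg (myPowNonneg hA a i x) (myPowNonneg hA b x k))
    (Finset.mem_univ j)

lemma myConsequentTrans (hA : ∀ i j, 0 ≤ A i j) {i j k : Fin n}
    (h1 : Consequent A i j) (h2 : Consequent A j k) : Consequent A i k := by
  obtain ⟨a, ha1, ha⟩ := h1
  obtain ⟨b, hb1, hb⟩ := h2
  exact ⟨a + b, by omega, lt_of_lt_of_le (mul_pos ha hb) (myPowEntryMul hA a b i j k)⟩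

lemma myConsequentSelf (hself : ∀ i, 0 < A i i) (i : Fin n) : Consequent A i i :=
  ⟨1, le_rfl, by simpa [pow_one] using hself i⟩

lemma myRecurrentConsequent (hA : ∀ i j, 0 ≤ A i j) {i j : Fin n}
    (hrec : Recurrent A i) (hij : Consequent A i j) : Recurrent A j := by
  intro c hc
  have hic : Consequent A i c := myConsequentTrans hA hij hc
  have hci : Consequent A c i := hrec c hic
  exact myConsequentTrans hA hci hij

lemma myExistsRecCons (hA : ∀ i j, 0 ≤ A i j) (hself : ∀ i, 0 < A i i) :
    ∀ i, ∃ r, Recurrent A r ∧ Consequent A i r := by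
  classical
  suffices H : ∀ c (i : Fin n),
      (univ.filter (fun j => Consequent A i j)).card ≤ c →
      ∃ r, Recurrent A r ∧ Consequent A i r by
    intro i; exact H _ i le_rfl
  intro c
  induction c with
  | zero =>
    intro i hc
    exfalso
    have hi : i ∈ univ.filter (fun j => Consequent A i j) :=
      Finset.mem_filter.mpr ⟨Finset.mem_univ i, myConsequentSelf hself i⟩
    have := Finset.card_pos.mpr ⟨i, hi⟩
    omega
  | succ c ih =>
    intro i hc
    by_cases hr : Recurrent A i
    · exact ⟨i, hr, myConsequentSelf hself i⟩
    · rw [Recurrent] at hr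
      push_neg at hr
      obtain ⟨j, hij, hji⟩ := hr
      have hsub : univ.filter (fun x => Consequent A j x) ⊆
          univ.filter (fun x => Consequent A i x) := by
        intro x hx
        rw [Finset.mem_filter] at hx ⊢
        exact ⟨hx.1, myConsequentTrans hA hij hx.2⟩
      have hss : univ.filter (fun x => Consequent A j x) ⊂
          univ.filter (fun x => Consequent A i x) := by
        refine (Finset.ssubset_iff_of_subset hsub).mpr ⟨i, ?_, ?_⟩
        · exact Finset.mem_filter.mpr ⟨Finset.mem_univ i, myConsequentSelf hself i⟩
        · simp [hji]
      have hcard : (univ.filter (fun x => Consequent A j x)).card ≤ c := by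
        have := Finset.card_lt_card hss
        omega
      obtain ⟨r, hrr, hjr⟩ := ih j hcard
      exact ⟨r, hrr, myConsequentTrans hA hij hjr⟩

lemma myPowZeroOfClosed {S : Finset (Fin n)}
    (hS : ∀ r ∈ S, ∀ j, j ∉ S → A r j = 0) :
    ∀ ℓ, ∀ r ∈ S, ∀ j, j ∉ S → (A ^ ℓ) r j = 0 := by
  intro ℓ
  induction ℓ with
  | zero =>
    intro r hr j hj
    rw [pow_zero, Matrix.one_apply_ne]
    rintro rfl
    exact hj hr
  | succ ℓ ih =>
    intro r hr j hj
    rw [pow_succ, Matrix.mul_apply]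
    refine Finset.sum_eq_zero fun x _ => ?_
    by_cases hx : x ∈ S
    · rw [hS x hx j hj, mul_zero]
    · rw [ih r hr x hx, zero_mul]

lemma myPowDiagPos (hA : ∀ i j, 0 ≤ A i j) (hself : ∀ i, 0 < A i i) :
    ∀ k (r : Fin n), 0 < (A ^ k) r r := by
  intro k
  induction k with
  | zero => intro r; simp [Matrix.one_apply]
  | succ k ih =>
    intro r
    have h := myPowEntryMul hA k 1 r r r
    rw [pow_one] at h
    exact lt_of_lt_of_le (mul_pos (ih r) (hself r)) h

end Helpers

/-- Absorption probabilities sum to one: for a row-stochastic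
matrix `A` with self-confidence, whose ergodic classes are `E 1, …, E m`, for
every state `i` the limits `h k = lim_ℓ ∑_{j ∈ E k} (A^ℓ) i j` exist and
`∑ k, h k = 1`. -/
theorem absorption_probabilities_sum_to_one
    (n : ℕ) (hn : 1 ≤ n)
    (A : Matrix (Fin n) (Fin n) ℝ)
    (hA_nonneg : ∀ i j, 0 ≤ A i j)
    (hA_rows : ∀ i, ∑ j, A i j = 1)
    (hself : ∀ i, 0 < A i i)
    (m : ℕ) (E : Fin m → Finset (Fin n))
    (hE_class : ∀ k, ∃ i, Recurrent A i ∧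
      ∀ j, j ∈ E k ↔ (Consequent A i j ∧ Consequent A j i))
    (hE_cover : ∀ i, Recurrent A i → ∃ k, i ∈ E k)
    (hE_inj : Function.Injective E) :
    ∀ i : Fin n, ∃ h : Fin m → ℝ,
      (∀ k, Tendsto (fun ℓ : ℕ => ∑ j ∈ E k, (A ^ ℓ) i j) atTop (𝓝 (h k))) ∧
      ∑ k, h k = 1 := by
  classical
  have hPnn := myPowNonneg hA_nonneg
  have hPrs := myPowRowSum hA_rows
  have hnonempty : Nonempty (Fin n) := ⟨⟨0, hn⟩⟩
  -- the recurrent set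
  set R : Finset (Fin n) := univ.filter (fun j => Recurrent A j) with hRdef
  have hRclosed : ∀ r ∈ R, ∀ j, j ∉ R → A r j = 0 := by
    intro r hr j hj
    by_contra hne
    have hpos : 0 < A r j := lt_of_le_of_ne (hA_nonneg r j) (Ne.symm hne)
    have hcons : Consequent A r j := ⟨1, le_rfl, by simpa [pow_one] using hpos⟩
    have hrrec : Recurrent A r := (Finset.mem_filter.mp hr).2
    have : Recurrent A j := myRecurrentConsequent hA_nonneg hrrec hcons
    exact hj (Finset.mem_filter.mpr ⟨Finset.mem_univ j, this⟩)
  have hRzero := myPowZeroOfClosed hRclosed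
  -- ergodic class properties
  have hErec : ∀ k, ∀ j ∈ E k, Recurrent A j := by
    intro k j hj
    obtain ⟨i0, hi0rec, hi0⟩ := hE_class k
    exact myRecurrentConsequent hA_nonneg hi0rec ((hi0 j).mp hj).1
  have hEclosed : ∀ k, ∀ r ∈ E k, ∀ j, j ∉ E k → A r j = 0 := by
    intro k r hr j hj
    by_contra hne
    have hpos : 0 < A r j := lt_of_le_of_ne (hA_nonneg r j) (Ne.symm hne)
    have hcons : Consequent A r j := ⟨1, le_rfl, by simpa [pow_one] using hpos⟩
    obtain ⟨i0, hi0rec, hi0⟩ := hE_class k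
    have hr' := (hi0 r).mp hr
    have hrrec : Recurrent A r := myRecurrentConsequent hA_nonneg hi0rec hr'.1
    have hjr : Consequent A j r := hrrec j hcons
    exact hj ((hi0 j).mpr ⟨myConsequentTrans hA_nonneg hr'.1 hcons,
      myConsequentTrans hA_nonneg hjr hr'.2⟩)
  have hEdisj' : ∀ k k' : Fin m, k ≠ k' → ∀ j, j ∈ E k → j ∉ E k' := by
    intro k k' hkk' j hjk hjk'
    apply hkk'
    apply hE_inj
    obtain ⟨i0, hi0rec, hi0⟩ := hE_class k
    obtain ⟨i1, hi1rec, hi1⟩ := hE_class k'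
    have h0j := (hi0 j).mp hjk
    have h1j := (hi1 j).mp hjk'
    ext x
    rw [hi0 x, hi1 x]
    constructor
    · rintro ⟨h0x, hx0⟩
      exact ⟨myConsequentTrans hA_nonneg (myConsequentTrans hA_nonneg h1j.1 h0j.2) h0x,
        myConsequentTrans hA_nonneg hx0 (myConsequentTrans hA_nonneg h0j.1 h1j.2)⟩
    · rintro ⟨h1x, hx1⟩
      exact ⟨myConsequentTrans hA_nonneg (myConsequentTrans hA_nonneg h0j.1 h1j.2) h1x,
        myConsequentTrans hA_nonneg hx1 (myConsequentTrans hA_nonneg h1j.1 h0j.2)⟩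
  have hEdisj : Set.PairwiseDisjoint (↑(univ : Finset (Fin m))) E := by
    intro k _ k' _ hkk'
    exact Finset.disjoint_left.mpr fun {j} hj => hEdisj' k k' hkk' j hj
  have hEunion : univ.biUnion E = R := by
    ext j
    constructor
    · intro hj
      obtain ⟨k, _, hjk⟩ := Finset.mem_biUnion.mp hj
      exact Finset.mem_filter.mpr ⟨Finset.mem_univ j, hErec k j hjk⟩
    · intro hj
      obtain ⟨k, hk⟩ := hE_cover j (Finset.mem_filter.mp hj).2
      exact Finset.mem_biUnion.mpr ⟨k, Finset.mem_univ k, hk⟩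
  intro i
  set f : Fin m → ℕ → ℝ := fun k ℓ => ∑ j ∈ E k, (A ^ ℓ) i j with hfdef
  -- each f k is monotone and bounded
  have hrow1 : ∀ k, ∀ x ∈ E k, ∑ j ∈ E k, A x j = 1 := by
    intro k x hx
    rw [← hA_rows x]
    exact Finset.sum_subset (Finset.subset_univ _)
      (fun j _ hj => hEclosed k x hx j hj)
  have hfmono : ∀ k, Monotone (f k) := by
    intro k
    apply monotone_nat_of_le_succ
    intro ℓ
    have hdec : f k (ℓ + 1) = ∑ x, (A ^ ℓ) i x * ∑ j ∈ E k, A x j := by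
      simp only [hfdef, pow_succ, Matrix.mul_apply]
      rw [Finset.sum_comm]
      exact Finset.sum_congr rfl fun x _ => (Finset.mul_sum _ _ _).symm
    calc f k ℓ = ∑ x ∈ E k, (A ^ ℓ) i x * ∑ j ∈ E k, A x j := by
          refine Finset.sum_congr rfl fun x hx => ?_
          rw [hrow1 k x hx, mul_one]
      _ ≤ ∑ x, (A ^ ℓ) i x * ∑ j ∈ E k, A x j :=
          Finset.sum_le_sum_of_subset_of_nonneg (Finset.subset_univ _)
            (fun x _ _ => mul_nonneg (hPnn ℓ i x)
              (Finset.sum_nonneg fun j _ => hA_nonneg x j))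
      _ = f k (ℓ + 1) := hdec.symm
  have hfle1 : ∀ k ℓ, f k ℓ ≤ 1 := by
    intro k ℓ
    calc f k ℓ ≤ ∑ j, (A ^ ℓ) i j :=
          Finset.sum_le_sum_of_subset_of_nonneg (Finset.subset_univ _)
            (fun j _ _ => hPnn ℓ i j)
      _ = 1 := hPrs ℓ i
  have hfbdd : ∀ k, BddAbove (Set.range (f k)) := by
    intro k
    exact ⟨1, by rintro y ⟨ℓ, rfl⟩; exact hfle1 k ℓ⟩
  refine ⟨fun k => ⨆ ℓ, f k ℓ, fun k => tendsto_atTop_ciSup (hfmono k) (hfbdd k), ?_⟩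
  -- the transient mass
  set g : Fin n → ℕ → ℝ :=
    fun r ℓ => ∑ j ∈ univ.filter (fun j => ¬ Recurrent A j), (A ^ ℓ) r j with hgdef
  have hgnn : ∀ r ℓ, 0 ≤ g r ℓ :=
    fun r ℓ => Finset.sum_nonneg fun j _ => hPnn ℓ r j
  have hgle1 : ∀ r ℓ, g r ℓ ≤ 1 := by
    intro r ℓ
    calc g r ℓ ≤ ∑ j, (A ^ ℓ) r j :=
          Finset.sum_le_sum_of_subset_of_nonneg (Finset.subset_univ _)
            (fun j _ _ => hPnn ℓ r j)
      _ = 1 := hPrs ℓ r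
  have hgR0 : ∀ b x, Recurrent A x → g x b = 0 := by
    intro b x hx
    refine Finset.sum_eq_zero fun j hj => ?_
    have hj' : ¬ Recurrent A j := (Finset.mem_filter.mp hj).2
    exact hRzero b x (Finset.mem_filter.mpr ⟨Finset.mem_univ x, hx⟩) j
      (fun hjR => hj' (Finset.mem_filter.mp hjR).2)
  have hgdec : ∀ a b r, g r (a + b) = ∑ x, (A ^ a) r x * g x b := by
    intro a b r
    simp only [hgdef, pow_add, Matrix.mul_apply]
    rw [Finset.sum_comm]
    exact Finset.sum_congr rfl fun x _ => (Finset.mul_sum _ _ _).symm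
  have hstep : ∀ (a b : ℕ) (r : Fin n) (c : ℝ), 0 ≤ c →
      (∀ x, ¬ Recurrent A x → g x b ≤ c) → g r (a + b) ≤ c * g r a := by
    intro a b r c hc hbound
    rw [hgdec]
    have hrhs : c * g r a = ∑ x, (if ¬ Recurrent A x then c * (A ^ a) r x else 0) := by
      rw [← Finset.sum_filter, ← Finset.mul_sum]
    rw [hrhs]
    refine Finset.sum_le_sum fun x _ => ?_
    by_cases hx : Recurrent A x
    · simp [hx, hgR0 b x hx]
    · simp only [hx, not_false_iff, if_true]
      rw [mul_comm c]
      exact mul_le_mul_of_nonneg_left (hbound x hx) (hPnn a r x)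
  have hganti : Antitone (g i) := by
    apply antitone_nat_of_succ_le
    intro ℓ
    have := hstep ℓ 1 i 1 zero_le_one (fun x _ => hgle1 x 1)
    simpa using this
  -- the uniform step N reaching the recurrent set
  obtain ⟨ρ, hρ⟩ : ∃ ρ : Fin n → Fin n, ∀ r, Recurrent A (ρ r) ∧ Consequent A r (ρ r) := by
    choose ρ h1 h2 using myExistsRecCons hA_nonneg hself
    exact ⟨ρ, fun r => ⟨h1 r, h2 r⟩⟩
  choose N0 hN01 hN0pos using fun r => (hρ r).2
  set N := univ.sup N0 with hNdef
  have hNle : ∀ r, N0 r ≤ N := fun r => Finset.le_sup (Finset.mem_univ r)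
  have hNrec : ∀ r, 0 < (A ^ N) r (ρ r) := by
    intro r
    have h1 := myPowEntryMul hA_nonneg (N0 r) (N - N0 r) r (ρ r) (ρ r)
    rw [Nat.add_sub_cancel' (hNle r)] at h1
    exact lt_of_lt_of_le
      (mul_pos (hN0pos r) (myPowDiagPos hA_nonneg hself _ (ρ r))) h1
  have huniv : (univ : Finset (Fin n)).Nonempty := Finset.univ_nonempty
  set θ : ℝ := univ.sup' huniv (fun r => g r N) with hθdef
  have hθ0 : 0 ≤ θ := le_trans (hgnn i N) (Finset.le_sup' (fun r => g r N) (Finset.mem_univ i))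
  have hθle : ∀ x, g x N ≤ θ := fun x => Finset.le_sup' (fun r => g r N) (Finset.mem_univ x)
  have hθ1 : θ < 1 := by
    rw [Finset.sup'_lt_iff]
    intro r _
    have hsplit : (∑ j ∈ R, (A ^ N) r j) + g r N = 1 := by
      rw [hRdef, hgdef, Finset.sum_filter_add_sum_filter_not]
      exact hPrs N r
    have hmem : ρ r ∈ R := Finset.mem_filter.mpr ⟨Finset.mem_univ _, (hρ r).1⟩
    have hpos : 0 < ∑ j ∈ R, (A ^ N) r j :=
      lt_of_lt_of_le (hNrec r)
        (Finset.single_le_sum (fun j _ => hPnn N r j) hmem)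
    linarith
  -- geometric decay
  have hgeo : ∀ k : ℕ, g i (k * N) ≤ θ ^ k := by
    intro k
    induction k with
    | zero => simpa using hgle1 i 0
    | succ k ih =>
      have h1 : g i (k * N + N) ≤ θ * g i (k * N) :=
        hstep (k * N) N i θ hθ0 (fun x _ => hθle x)
      calc g i ((k + 1) * N) = g i (k * N + N) := by rw [Nat.succ_mul]
        _ ≤ θ * g i (k * N) := h1
        _ ≤ θ * θ ^ k := mul_le_mul_of_nonneg_left ih hθ0
        _ = θ ^ (k + 1) := by ring
  -- limit of g i is 0
  have hgbdd : BddBelow (Set.range (g i)) :=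
    ⟨0, by rintro y ⟨ℓ, rfl⟩; exact hgnn i ℓ⟩
  have hgtendsto : Tendsto (g i) atTop (𝓝 (⨅ ℓ, g i ℓ)) :=
    tendsto_atTop_ciInf hganti hgbdd
  have hinf0 : (⨅ ℓ, g i ℓ) = 0 := by
    have hle : ∀ k : ℕ, (⨅ ℓ, g i ℓ) ≤ θ ^ k :=
      fun k => (ciInf_le hgbdd (k * N)).trans (hgeo k)
    have h0le : 0 ≤ ⨅ ℓ, g i ℓ := le_ciInf (fun ℓ => hgnn i ℓ)
    have hle0 : (⨅ ℓ, g i ℓ) ≤ 0 :=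
      ge_of_tendsto' (tendsto_pow_atTop_nhds_zero_of_lt_one hθ0 hθ1) hle
    linarith
  have hg0 : Tendsto (g i) atTop (𝓝 0) := hinf0 ▸ hgtendsto
  -- conclude
  have heq : ∀ ℓ, ∑ k, f k ℓ = 1 - g i ℓ := by
    intro ℓ
    have h1 : ∑ k, f k ℓ = ∑ j ∈ R, (A ^ ℓ) i j := by
      rw [← hEunion, Finset.sum_biUnion hEdisj]
    have h2 : (∑ j ∈ R, (A ^ ℓ) i j) + g i ℓ = 1 := by
      rw [hRdef, hgdef, Finset.sum_filter_add_sum_filter_not]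
      exact hPrs ℓ i
    linarith
  have hsum1 : Tendsto (fun ℓ => ∑ k, f k ℓ) atTop (𝓝 (∑ k, ⨆ ℓ', f k ℓ')) :=
    tendsto_finset_sum _ (fun k _ => tendsto_atTop_ciSup (hfmono k) (hfbdd k))
  have hsum2 : Tendsto (fun ℓ => ∑ k, f k ℓ) atTop (𝓝 1) := by
    have h1 : Tendsto (fun ℓ => 1 - g i ℓ) atTop (𝓝 (1 - 0)) :=
      Tendsto.const_sub _ hg0
    rw [sub_zero] at h1
    exact h1.congr (fun ℓ => (heq ℓ).symm)
  exact tendsto_nhds_unique hsum1 hsum2
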